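/- Let A = (⊕_{i≥0} A^i, d=0) and B be positively graded dg algebras with zero differential whose degree-zero parts are finite products of division rings, and let φ : A → B be a dg algebra morphism such that φ⁰ : A⁰ → B⁰ is an isomorphism. If I is an integer segment and φ^i is an isomorphism for all i ≤ |I| + 2, then extension of scalars ? ⊗^L_A B : dgPer^I(A) → dgPer^I(B) is an equivalence of categories. -/

import Mathlib

/-!
STATEMENT 13: Let `A = (⊕_{i≥0} A^i, d = 0)` and `B` be positively graded dg
algebras with zero differential whose degree-zero parts are finite products of
division rings, and `φ : A → B` a dg algebra morphism with `φ⁰ : A⁰ → B⁰` an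
isomorphism.  If `I = [a,b]` is an integer segment and `φ^i` is an isomorphism
for all `i ≤ |I| + 2`, then extension of scalars
`? ⊗^L_A B : dgPer^I(A) → dgPer^I(B)` is an equivalence of categories.

Following the paper's proof (and its Theorem on filtered dg modules), objects
of `dgPer^I` are represented by their `dgFilt` presentations: finite systems
of generators `{l_k} e_{v_k} A` (with idempotents `v_k` and shifts `l_k`,
`a ≤ -l_k ≤ b` for the window `I = [a,b]`) together with a matrix differential
`x` with `x² = 0`; morphisms are matrices, and morphisms in the derived
category are matrices modulo homotopy.  Extension of scalars applies `φ` to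
all matrix entries.  The equivalence is expressed as: this operation is
(1) essentially surjective (every presentation over `B` in the window lifts
to one over `A`), (2) full and (3) faithful on homotopy classes of morphisms.
-/

/-- A (ℤ-)graded algebra, componentwise (a positively graded dg algebra with
zero differential is exactly such a graded algebra supported in nonnegative
degrees). -/
structure GrAlg where
  R : ℤ → Type
  [acg : ∀ n, AddCommGroup (R n)]
  mul : ∀ {m n p : ℤ}, m + n = p → R m → R n → R p
  one : R 0
  mul_add : ∀ {m n p : ℤ} (h : m + n = p) (a : R m) (b c : R n),
    mul h a (b + c) = mul h a b + mul h a c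
  add_mul : ∀ {m n p : ℤ} (h : m + n = p) (a b : R m) (c : R n),
    mul h (a + b) c = mul h a c + mul h b c
  assoc : ∀ {m n p s t q : ℤ} (h1 : m + n = s) (h2 : s + p = q)
    (h3 : n + p = t) (h4 : m + t = q) (a : R m) (b : R n) (c : R p),
    mul h2 (mul h1 a b) c = mul h4 a (mul h3 b c)
  one_mul : ∀ {n : ℤ} (a : R n), mul (zero_add n) one a = a
  mul_one : ∀ {n : ℤ} (a : R n), mul (add_zero n) a one = a

attribute [instance] GrAlg.acg

namespace GrAlg

variable (A : GrAlg)

/-- positively graded -/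
def Pos : Prop := ∀ n : ℤ, n < 0 → Subsingleton (A.R n)

variable {A}

lemma mul_zero' {m n p : ℤ} (h : m + n = p) (a : A.R m) :
    A.mul h a (0 : A.R n) = 0 := by
  have h0 := A.mul_add h a 0 0
  rw [add_zero] at h0
  exact left_eq_add.mp h0

lemma zero_mul' {m n p : ℤ} (h : m + n = p) (c : A.R n) :
    A.mul h (0 : A.R m) c = 0 := by
  have h0 := A.add_mul h 0 0 c
  rw [add_zero] at h0
  exact left_eq_add.mp h0

lemma mul_neg' {m n p : ℤ} (h : m + n = p) (a : A.R m) (b : A.R n) :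
    A.mul h a (-b) = -A.mul h a b := by
  have h0 := A.mul_add h a b (-b)
  rw [add_neg_cancel, mul_zero'] at h0
  exact (neg_eq_of_add_eq_zero_right h0.symm).symm

end GrAlg

/-- A complete system of orthogonal idempotents of `A⁰` exhibiting `A⁰` as a
finite product of division rings. -/
structure IdemData (A : GrAlg) (ι : Type) [Fintype ι] where
  e : ι → A.R 0
  idem : ∀ x, A.mul (zero_add 0) (e x) (e x) = e x
  orth : ∀ x y, x ≠ y → A.mul (zero_add 0) (e x) (e y) = 0
  sum_one : ∑ x, e x = A.one
  /-- `e_x A⁰ e_y = 0` for `x ≠ y` -/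
  offdiag : ∀ x y, x ≠ y → ∀ a : A.R 0,
    A.mul (zero_add 0) (e x) (A.mul (add_zero 0) a (e y)) = 0
  /-- each `e_x A⁰ e_x` is a division ring -/
  div : ∀ (x : ι) (a : A.R 0),
    A.mul (zero_add 0) (e x) (A.mul (add_zero 0) a (e x)) = a → a ≠ 0 →
    ∃ b : A.R 0, A.mul (zero_add 0) (e x) (A.mul (add_zero 0) b (e x)) = b ∧
      A.mul (zero_add 0) a b = e x ∧ A.mul (zero_add 0) b a = e x

namespace IdemData

variable {A : GrAlg} {ι : Type} [Fintype ι] (E : IdemData A ι)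

/-- The block `e_x A^m e_y`, as an additive subgroup of `A^m`. -/
def blkSubgroup (m : ℤ) (x y : ι) : AddSubgroup (A.R m) where
  carrier := {r | A.mul (zero_add m) (E.e x) r = r ∧ A.mul (add_zero m) r (E.e y) = r}
  add_mem' := by
    rintro a b ⟨ha1, ha2⟩ ⟨hb1, hb2⟩
    constructor
    · rw [A.mul_add, ha1, hb1]
    · rw [A.add_mul, ha2, hb2]
  zero_mem' := by
    constructor
    · exact GrAlg.mul_zero' _ _
    · exact GrAlg.zero_mul' _ _
  neg_mem' := by
    rintro a ⟨ha1, ha2⟩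
    constructor
    · rw [GrAlg.mul_neg', ha1]
    · show A.mul (add_zero m) (-a) (E.e y) = -a
      have h0 := A.add_mul (add_zero m) a (-a) (E.e y)
      rw [add_neg_cancel, GrAlg.zero_mul'] at h0
      rw [(neg_eq_of_add_eq_zero_right h0.symm).symm, ha2]

/-- An element of the block `e_x A^m e_y`. -/
abbrev Blk (m : ℤ) (x y : ι) : Type := ↥(E.blkSubgroup m x y)

/-- Multiplication of block elements. -/
def blkMul {m n p : ℤ} (h : m + n = p) {x y z : ι}
    (a : E.Blk m x y) (b : E.Blk n y z) : E.Blk p x z := by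
  refine ⟨A.mul h a.1 b.1, ?_, ?_⟩
  · rw [← A.assoc (zero_add m) h h (zero_add p) (E.e x) a.1 b.1, a.2.1]
  · rw [A.assoc h (add_zero p) (add_zero n) h a.1 b.1 (E.e z), b.2.2]

/-- Transport of a block element along an equality of degrees. -/
def castBlk {m m' : ℤ} (h : m = m') {x y : ι} (a : E.Blk m x y) : E.Blk m' x y :=
  h ▸ a

end IdemData

/-- A `dgFilt` presentation of an object of `dgPer(A)`: a dg module which, as
a graded module, is `⊕_k {l_k} e_{v_k} A` with a (strictly triangular) matrix
differential `x` of square zero; the shifts `l` are decreasing, giving the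
filtration with subquotients `{l_k} e_{v_k} A`. -/
structure DGData {ι : Type} [Fintype ι] {A : GrAlg} (E : IdemData A ι) where
  s : ℕ
  v : Fin s → ι
  l : Fin s → ℤ
  lanti : ∀ i j : Fin s, i ≤ j → l j ≤ l i
  x : ∀ i j : Fin s, E.Blk (l i + 1 - l j) (v i) (v j)
  tri : ∀ i j : Fin s, j ≤ i → x i j = 0
  x_sq : ∀ i j : Fin s,
    (∑ k : Fin s, E.blkMul
      (show (l i + 1 - l k) + (l k + 1 - l j) = l i + 2 - l j by omega)
      (x i k) (x k j)) = 0

namespace DGData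

variable {ι : Type} [Fintype ι] {A : GrAlg} {E : IdemData A ι}

/-- The presentation lies in the window `dgPer^{[a,b]}`: it is generated in
degrees `-l_k ∈ [a, b]`. -/
def InWindow (X : DGData E) (a b : ℤ) : Prop :=
  ∀ k : Fin X.s, a ≤ -X.l k ∧ -X.l k ≤ b

/-- A morphism of dg modules in terms of presentations: a matrix commuting
with the differentials. -/
structure Map (X Y : DGData E) where
  f : ∀ (i : Fin Y.s) (j : Fin X.s), E.Blk (Y.l i - X.l j) (Y.v i) (X.v j)
  comm : ∀ (i : Fin Y.s) (j : Fin X.s),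
    (∑ k : Fin Y.s, E.blkMul
        (show (Y.l i + 1 - Y.l k) + (Y.l k - X.l j) = Y.l i + 1 - X.l j by omega)
        (Y.x i k) (f k j)) =
    (∑ k : Fin X.s, E.blkMul
        (show (Y.l i - X.l k) + (X.l k + 1 - X.l j) = Y.l i + 1 - X.l j by omega)
        (f i k) (X.x k j))

/-- Two morphisms are homotopic if their difference is `y ∘ h + h ∘ x` for a
degree `-1` matrix `h`. -/
def Homotopic {X Y : DGData E} (f g : Map X Y) : Prop :=
  ∃ h : ∀ (i : Fin Y.s) (j : Fin X.s), E.Blk (Y.l i - 1 - X.l j) (Y.v i) (X.v j),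
    ∀ (i : Fin Y.s) (j : Fin X.s),
      f.f i j - g.f i j =
        (∑ k : Fin Y.s, E.blkMul
          (show (Y.l i + 1 - Y.l k) + (Y.l k - 1 - X.l j) = Y.l i - X.l j by omega)
          (Y.x i k) (h k j))
        + (∑ k : Fin X.s, E.blkMul
          (show (Y.l i - 1 - X.l k) + (X.l k + 1 - X.l j) = Y.l i - X.l j by omega)
          (h i k) (X.x k j))

/-- The entries of the identity morphism. -/
def idEntry (X : DGData E) (i j : Fin X.s) : E.Blk (X.l i - X.l j) (X.v i) (X.v j) :=
  if h : i = j then by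
    subst h
    exact E.castBlk (by omega) ⟨E.e (X.v i), E.idem _, E.idem _⟩
  else 0

/-- The composite matrix of two morphisms. -/
def compEntry {X Y Z : DGData E} (f : Map X Y) (g : Map Y Z)
    (i : Fin Z.s) (j : Fin X.s) : E.Blk (Z.l i - X.l j) (Z.v i) (X.v j) :=
  ∑ k : Fin Y.s, E.blkMul
    (show (Z.l i - Y.l k) + (Y.l k - X.l j) = Z.l i - X.l j by omega)
    (g.f i k) (f.f k j)

end DGData

/-- A morphism of graded algebras (a dg algebra morphism between dg algebras
with zero differential). -/
structure GrHom (A B : GrAlg) where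
  f : ∀ n, A.R n →+ B.R n
  f_one : f 0 A.one = B.one
  f_mul : ∀ {m n p : ℤ} (h : m + n = p) (a : A.R m) (b : A.R n),
    f p (A.mul h a b) = B.mul h (f m a) (f n b)

namespace GrHom

variable {A B : GrAlg} {ι : Type} [Fintype ι]
  {EA : IdemData A ι} {EB : IdemData B ι}

/-- `φ` applied to a block element, given that `φ` matches the idempotents. -/
def mapBlk (φ : GrHom A B) (hφe : ∀ x, φ.f 0 (EA.e x) = EB.e x)
    {m : ℤ} {x y : ι} (a : EA.Blk m x y) : EB.Blk m x y := by
  refine ⟨φ.f m a.1, ?_, ?_⟩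
  · rw [← hφe, ← φ.f_mul, a.2.1]
  · rw [← hφe, ← φ.f_mul, a.2.2]

lemma mapBlk_mul (φ : GrHom A B) (hφe : ∀ x, φ.f 0 (EA.e x) = EB.e x)
    {m n p : ℤ} (h : m + n = p) {x y z : ι} (a : EA.Blk m x y) (b : EA.Blk n y z) :
    φ.mapBlk hφe (EA.blkMul h a b) = EB.blkMul h (φ.mapBlk hφe a) (φ.mapBlk hφe b) :=
  Subtype.ext (φ.f_mul h a.1 b.1)

lemma mapBlk_addHom (φ : GrHom A B) (hφe : ∀ x, φ.f 0 (EA.e x) = EB.e x)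
    {m : ℤ} {x y : ι} (a b : EA.Blk m x y) :
    φ.mapBlk hφe (a + b) = φ.mapBlk hφe a + φ.mapBlk hφe b :=
  Subtype.ext (map_add (φ.f m) a.1 b.1)

/-- `mapBlk` as an additive monoid morphism. -/
def mapBlkHom (φ : GrHom A B) (hφe : ∀ x, φ.f 0 (EA.e x) = EB.e x)
    (m : ℤ) (x y : ι) : EA.Blk m x y →+ EB.Blk m x y where
  toFun := φ.mapBlk hφe
  map_zero' := Subtype.ext (map_zero (φ.f m))
  map_add' := φ.mapBlk_addHom hφe

@[simp] lemma mapBlkHom_apply (φ : GrHom A B) (hφe : ∀ x, φ.f 0 (EA.e x) = EB.e x)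
    {m : ℤ} {x y : ι} (a : EA.Blk m x y) :
    φ.mapBlkHom hφe m x y a = φ.mapBlk hφe a := rfl

/-- Extension of scalars of a presentation along `φ`: apply `φ` to all the
entries of the matrix differential. -/
def mapData (φ : GrHom A B) (hφe : ∀ x, φ.f 0 (EA.e x) = EB.e x)
    (X : DGData EA) : DGData EB where
  s := X.s
  v := X.v
  l := X.l
  lanti := X.lanti
  x i j := φ.mapBlk hφe (X.x i j)
  tri i j hij := by
    show φ.mapBlk hφe (X.x i j) = 0
    rw [X.tri i j hij]
    exact Subtype.ext (map_zero (φ.f _))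
  x_sq i j := by
    have h2 := congrArg (φ.mapBlkHom hφe (X.l i + 2 - X.l j) (X.v i) (X.v j)) (X.x_sq i j)
    rw [map_sum, map_zero] at h2
    rw [← h2]
    refine Finset.sum_congr rfl fun k _ => ?_
    rw [mapBlkHom_apply, φ.mapBlk_mul hφe]

/-- Extension of scalars of a morphism of presentations along `φ`. -/
def mapMap (φ : GrHom A B) (hφe : ∀ x, φ.f 0 (EA.e x) = EB.e x)
    {X Y : DGData EA} (f : DGData.Map X Y) :
    DGData.Map (φ.mapData hφe X) (φ.mapData hφe Y) where
  f i j := φ.mapBlk hφe (f.f i j)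
  comm i j := by
    have hA := congrArg (φ.mapBlkHom hφe (Y.l i + 1 - X.l j) (Y.v i) (X.v j)) (f.comm i j)
    rw [map_sum, map_sum] at hA
    have l1 : (∑ k : Fin Y.s, EB.blkMul
        (show (Y.l i + 1 - Y.l k) + (Y.l k - X.l j) = Y.l i + 1 - X.l j by omega)
        (φ.mapBlk hφe (Y.x i k)) (φ.mapBlk hφe (f.f k j))) =
        ∑ k : Fin Y.s, φ.mapBlkHom hφe (Y.l i + 1 - X.l j) (Y.v i) (X.v j)
          (EA.blkMul (show (Y.l i + 1 - Y.l k) + (Y.l k - X.l j) = Y.l i + 1 - X.l j by omega)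
            (Y.x i k) (f.f k j)) :=
      Finset.sum_congr rfl fun k _ => by rw [mapBlkHom_apply, φ.mapBlk_mul hφe]
    have l2 : (∑ k : Fin X.s, EB.blkMul
        (show (Y.l i - X.l k) + (X.l k + 1 - X.l j) = Y.l i + 1 - X.l j by omega)
        (φ.mapBlk hφe (f.f i k)) (φ.mapBlk hφe (X.x k j))) =
        ∑ k : Fin X.s, φ.mapBlkHom hφe (Y.l i + 1 - X.l j) (Y.v i) (X.v j)
          (EA.blkMul (show (Y.l i - X.l k) + (X.l k + 1 - X.l j) = Y.l i + 1 - X.l j by omega)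
            (f.f i k) (X.x k j)) :=
      Finset.sum_congr rfl fun k _ => by rw [mapBlkHom_apply, φ.mapBlk_mul hφe]
    exact l1.trans (hA.trans l2.symm)

end GrHom

section Aux

variable {A B : GrAlg} {ι : Type} [Fintype ι]
  {EA : IdemData A ι} {EB : IdemData B ι}

lemma mapBlk_sum (φ : GrHom A B) (hφe : ∀ x, φ.f 0 (EA.e x) = EB.e x)
    {m : ℤ} {x y : ι} {n : ℕ} (g : Fin n → EA.Blk m x y) :
    φ.mapBlk hφe (∑ k, g k) = ∑ k, φ.mapBlk hφe (g k) :=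
  map_sum (φ.mapBlkHom hφe m x y) g Finset.univ

lemma mapBlk_sub (φ : GrHom A B) (hφe : ∀ x, φ.f 0 (EA.e x) = EB.e x)
    {m : ℤ} {x y : ι} (u w : EA.Blk m x y) :
    φ.mapBlk hφe (u - w) = φ.mapBlk hφe u - φ.mapBlk hφe w :=
  map_sub (φ.mapBlkHom hφe m x y) u w

lemma mapBlk_add (φ : GrHom A B) (hφe : ∀ x, φ.f 0 (EA.e x) = EB.e x)
    {m : ℤ} {x y : ι} (u w : EA.Blk m x y) :
    φ.mapBlk hφe (u + w) = φ.mapBlk hφe u + φ.mapBlk hφe w :=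
  map_add (φ.mapBlkHom hφe m x y) u w

lemma mapBlk_zero (φ : GrHom A B) (hφe : ∀ x, φ.f 0 (EA.e x) = EB.e x)
    {m : ℤ} {x y : ι} :
    φ.mapBlk hφe (0 : EA.Blk m x y) = 0 :=
  map_zero (φ.mapBlkHom hφe m x y)

lemma DGData_mk_eq {E : IdemData A ι}
    {s : ℕ} {v : Fin s → ι} {l : Fin s → ℤ}
    {la la' : ∀ i j : Fin s, i ≤ j → l j ≤ l i}
    {x x' : ∀ i j : Fin s, E.Blk (l i + 1 - l j) (v i) (v j)}
    {tri : ∀ i j : Fin s, j ≤ i → x i j = 0}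
    {tri' : ∀ i j : Fin s, j ≤ i → x' i j = 0}
    {sq : ∀ i j : Fin s,
      (∑ k : Fin s, E.blkMul
        (show (l i + 1 - l k) + (l k + 1 - l j) = l i + 2 - l j by omega)
        (x i k) (x k j)) = 0}
    {sq' : ∀ i j : Fin s,
      (∑ k : Fin s, E.blkMul
        (show (l i + 1 - l k) + (l k + 1 - l j) = l i + 2 - l j by omega)
        (x' i k) (x' k j)) = 0}
    (hx : x = x') :
    (DGData.mk s v l la x tri sq : DGData E) = DGData.mk s v l la' x' tri' sq' := by
  subst hx; rfl

lemma Map_mk_eq {E : IdemData A ι} {X Y : DGData E}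
    {f f' : ∀ (i : Fin Y.s) (j : Fin X.s), E.Blk (Y.l i - X.l j) (Y.v i) (X.v j)}
    {c : _} {c' : _} (hf : f = f') :
    (DGData.Map.mk f c : DGData.Map X Y) = DGData.Map.mk f' c' := by
  subst hf; rfl

end Aux

theorem statement13 {A B : GrAlg}
    -- positively graded dg algebras with zero differential:
    (hApos : A.Pos) (hBpos : B.Pos)
    -- degree zero parts are (the same) finite product of division rings:
    {ι : Type} [Fintype ι]
    (EA : IdemData A ι) (EB : IdemData B ι)
    -- the dg algebra morphism `φ`, with `φ⁰` an isomorphism (matching the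
    -- idempotent decompositions):
    (φ : GrHom A B) (hφe : ∀ x, φ.f 0 (EA.e x) = EB.e x)
    (hφ0 : Function.Bijective (φ.f 0))
    -- the segment `I = [a, b]`:
    (a b : ℤ) (hab : a ≤ b)
    -- `φ` is an isomorphism up to degree `|I| + 2`:
    (hiso : ∀ n : ℤ, n ≤ (b - a) + 2 → Function.Bijective (φ.f n)) :
    -- conclusion: extension of scalars `? ⊗^L_A B : dgPer^I(A) → dgPer^I(B)`
    -- is an equivalence of categories, expressed on `dgFilt` presentations:
    -- (1) essentially surjective:
    (∀ Z : DGData EB, Z.InWindow a b →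
      ∃ X : DGData EA, X.InWindow a b ∧ φ.mapData hφe X = Z)
    -- (2) full (on homotopy categories, hence on derived categories):
    ∧ (∀ X Y : DGData EA, X.InWindow a b → Y.InWindow a b →
        ∀ F : DGData.Map (φ.mapData hφe X) (φ.mapData hφe Y),
          ∃ f : DGData.Map X Y, φ.mapMap hφe f = F)
    -- (3) faithful:
    ∧ (∀ X Y : DGData EA, X.InWindow a b → Y.InWindow a b →
        ∀ f g : DGData.Map X Y,
          DGData.Homotopic (φ.mapMap hφe f) (φ.mapMap hφe g) →
            DGData.Homotopic f g) := by
  classical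
  -- injectivity of `mapBlk` in degrees `≤ b - a + 2`
  have hinj : ∀ (m : ℤ), m ≤ (b - a) + 2 → ∀ (x y : ι) (u w : EA.Blk m x y),
      φ.mapBlk hφe u = φ.mapBlk hφe w → u = w := by
    intro m hm x y u w h
    exact Subtype.ext ((hiso m hm).1 (congrArg Subtype.val h))
  -- surjectivity of `mapBlk` in degrees `≤ b - a + 2`
  have hsurj : ∀ (m : ℤ), m ≤ (b - a) + 2 → ∀ (x y : ι) (w : EB.Blk m x y),
      ∃ u : EA.Blk m x y, φ.mapBlk hφe u = w := by
    intro m hm x y w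
    obtain ⟨u0, hu0⟩ := (hiso m hm).2 w.1
    refine ⟨⟨u0, ?_, ?_⟩, Subtype.ext hu0⟩
    · apply (hiso m hm).1
      rw [φ.f_mul, hφe, hu0]
      exact w.2.1
    · apply (hiso m hm).1
      rw [φ.f_mul, hφe, hu0]
      exact w.2.2
  choose inv hinv using hsurj
  refine ⟨?_, ?_, ?_⟩
  -- (1) essential surjectivity
  · intro Z hZ
    obtain ⟨s, v, l, la, x, tr, sq⟩ := Z
    have hd : ∀ i j : Fin s, l i + 1 - l j ≤ (b - a) + 2 := by
      intro i j
      have h1 := hZ i; have h2 := hZ j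
      simp only [DGData.InWindow] at h1 h2
      omega
    have hd2 : ∀ i j : Fin s, l i + 2 - l j ≤ (b - a) + 2 := by
      intro i j
      have h1 := hZ i; have h2 := hZ j
      simp only [DGData.InWindow] at h1 h2
      omega
    refine ⟨⟨s, v, l, la, fun i j => inv _ (hd i j) _ _ (x i j), ?_, ?_⟩, ?_, ?_⟩
    · intro i j hij
      apply hinj _ (hd i j)
      rw [hinv, tr i j hij, mapBlk_zero]
    · intro i j
      apply hinj _ (hd2 i j)
      rw [mapBlk_zero, mapBlk_sum]
      rw [← sq i j]
      refine Finset.sum_congr rfl fun k _ => ?_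
      rw [φ.mapBlk_mul hφe, hinv, hinv]
    · exact hZ
    · exact DGData_mk_eq (funext fun i => funext fun j => hinv _ _ _ _ _)
  -- (2) fullness
  · intro X Y hX hY F
    have hd : ∀ (i : Fin Y.s) (j : Fin X.s), Y.l i - X.l j ≤ (b - a) + 2 := by
      intro i j
      have h1 := hY i; have h2 := hX j
      omega
    have hd1 : ∀ (i : Fin Y.s) (j : Fin X.s), Y.l i + 1 - X.l j ≤ (b - a) + 2 := by
      intro i j
      have h1 := hY i; have h2 := hX j
      omega
    refine ⟨⟨fun i j => inv _ (hd i j) _ _ (F.f i j), ?_⟩, ?_⟩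
    · intro i j
      apply hinj _ (hd1 i j)
      calc (show EB.Blk (Y.l i + 1 - X.l j) (Y.v i) (X.v j) from φ.mapBlk hφe (∑ k : Fin Y.s, EA.blkMul
              (show (Y.l i + 1 - Y.l k) + (Y.l k - X.l j) = Y.l i + 1 - X.l j by omega)
              (Y.x i k) (inv _ (hd k j) _ _ (F.f k j))))
          = (show EB.Blk (Y.l i + 1 - X.l j) (Y.v i) (X.v j) from ∑ k : Fin Y.s, EB.blkMul
              (show (Y.l i + 1 - Y.l k) + (Y.l k - X.l j) = Y.l i + 1 - X.l j by omega)
              (φ.mapBlk hφe (Y.x i k)) (F.f k j)) := by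
            rw [mapBlk_sum]
            exact Finset.sum_congr rfl fun k _ => by
              rw [φ.mapBlk_mul hφe]; exact congrArg (EB.blkMul _ _) (hinv _ _ _ _ _)
        _ = (show EB.Blk (Y.l i + 1 - X.l j) (Y.v i) (X.v j) from ∑ k : Fin X.s, EB.blkMul
              (show (Y.l i - X.l k) + (X.l k + 1 - X.l j) = Y.l i + 1 - X.l j by omega)
              (F.f i k) (φ.mapBlk hφe (X.x k j))) := F.comm i j
        _ = (show EB.Blk (Y.l i + 1 - X.l j) (Y.v i) (X.v j) from φ.mapBlk hφe (∑ k : Fin X.s, EA.blkMul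
              (show (Y.l i - X.l k) + (X.l k + 1 - X.l j) = Y.l i + 1 - X.l j by omega)
              (inv _ (hd i k) _ _ (F.f i k)) (X.x k j))) := by
            rw [mapBlk_sum]
            symm
            exact Finset.sum_congr rfl fun k _ =>
              (φ.mapBlk_mul hφe _ _ _).trans (congrArg (fun t => EB.blkMul _ t _) (hinv _ _ _ _ _))
    · exact Map_mk_eq (funext fun i => funext fun j => hinv _ _ _ _ _)
  -- (3) faithfulness
  · intro X Y hX hY f g ⟨H, hH⟩
    have hd : ∀ (i : Fin Y.s) (j : Fin X.s), Y.l i - 1 - X.l j ≤ (b - a) + 2 := by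
      intro i j
      have h1 := hY i; have h2 := hX j
      omega
    have hd0 : ∀ (i : Fin Y.s) (j : Fin X.s), Y.l i - X.l j ≤ (b - a) + 2 := by
      intro i j
      have h1 := hY i; have h2 := hX j
      omega
    refine ⟨fun i j => inv _ (hd i j) _ _ (H i j), ?_⟩
    intro i j
    apply hinj _ (hd0 i j)
    refine (mapBlk_sub φ hφe _ _).trans ((hH i j).trans ?_)
    rw [mapBlk_add, mapBlk_sum, mapBlk_sum]
    refine congrArg₂ (· + ·) ?_ ?_ <;>
      refine Finset.sum_congr rfl fun k _ => ?_ <;>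
      rw [φ.mapBlk_mul hφe] <;> beta_reduce <;> erw [hinv] <;> rfl
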